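/- For any uniformity ℰ on ω₁ compatible with the order topology, every uniform open cover of ω₁ contains an element whose complement is countable. Consequently ω₁ is uniform-Rothberger with respect to ℰ: for every sequence ⟨𝒰_n : n ∈ ω⟩ of uniform open covers, there exist U_n ∈ 𝒰_n with ⋃_n U_n = ω₁. -/

import Mathlib

open Ordinal in
/-- The first uncountable ordinal, as a type. -/
def Omega1 : Type 1 := {o : Ordinal // o < ω₁}

noncomputable instance : LinearOrder Omega1 := Subtype.instLinearOrder _

/-- The order topology on `ω₁`. -/
noncomputable def omega1OrderTopology : TopologicalSpace Omega1 := Preorder.topology Omega1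

namespace Omega1Aux

open Ordinal Cardinal Set

lemma val_lt_iff {x y : Omega1} : x < y ↔ x.1 < y.1 := Iff.rfl
lemma val_le_iff {x y : Omega1} : x ≤ y ↔ x.1 ≤ y.1 := Iff.rfl

/-- successor in Omega1 -/
noncomputable def osucc (x : Omega1) : Omega1 :=
  ⟨x.1 + 1, by rw [Ordinal.add_one_eq_succ]; exact (Cardinal.isSuccLimit_omega 1).succ_lt x.2⟩

lemma lt_osucc (x : Omega1) : x < osucc x := by
  show x.1 < x.1 + 1
  rw [Ordinal.add_one_eq_succ]
  exact Order.lt_succ _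

/-- zero in Omega1 -/
noncomputable def ozero : Omega1 := ⟨0, Ordinal.omega_pos 1⟩

lemma card_le_aleph0 {o : Ordinal} (h : o < Ordinal.omega 1) : o.card ≤ ℵ₀ := by
  rw [← Cardinal.ord_aleph 1] at h
  have h2 : o.card < ℵ_ 1 := Cardinal.lt_ord.mp h
  rwa [show (ℵ_ 1) = ℵ₁ from rfl, ← Cardinal.succ_aleph0, Order.lt_succ_iff] at h2

lemma countable_Iic (x : Omega1) : (Set.Iic x).Countable := by
  have hcnt : Countable (Set.Iio (osucc x).1 : Set Ordinal) := by
    rw [← Cardinal.mk_le_aleph0_iff, Ordinal.mk_Iio_ordinal]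
    calc Cardinal.lift.{1} ((osucc x).1.card) ≤ Cardinal.lift.{1} ℵ₀ :=
          Cardinal.lift_le.mpr (card_le_aleph0 (osucc x).2)
      _ = ℵ₀ := Cardinal.lift_aleph0
  rw [← Set.countable_coe_iff]
  refine Function.Injective.countable (β := (Set.Iio (osucc x).1 : Set Ordinal))
    (f := fun y => ⟨y.1.1, lt_of_le_of_lt y.2 (lt_osucc x)⟩) ?_
  intro a b hab
  have h3 : a.1.1 = b.1.1 := by have := congrArg Subtype.val hab; exact this
  exact Subtype.ext (Subtype.ext h3)

lemma exists_sup (β : ℕ → Omega1) :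
    ∃ b : Omega1, (∀ n, β n ≤ b) ∧ ∀ z : Omega1, z < b → ∃ n, z < β n := by
  have h : iSup (fun n => (β n).1) < Ordinal.omega 1 := by
    have := Ordinal.iSup_lt_omega_one (f := fun n => (β n).1)
      (fun n => (β n).2)
    exact this
  refine ⟨⟨_, h⟩, fun n => Ordinal.le_iSup (fun n => (β n).1) n, fun z hz => ?_⟩
  exact Ordinal.lt_iSup_iff.mp hz

/-- The key lemma: any uniform cover has a co-countable member. -/
lemma key (𝔘 : UniformSpace Omega1)
    (hcompat : 𝔘.toTopologicalSpace = omega1OrderTopology)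
    (𝒰 : Set (Set Omega1))
    (hunif : ∃ E ∈ 𝔘.uniformity, ∀ x : Omega1, ∃ U ∈ 𝒰, {y | (x, y) ∈ E} ⊆ U) :
    ∃ U ∈ 𝒰, (Uᶜ : Set Omega1).Countable := by
  letI : UniformSpace Omega1 := 𝔘
  haveI : OrderTopology Omega1 := ⟨hcompat.trans rfl⟩
  obtain ⟨E, hE, href⟩ := hunif
  obtain ⟨E', hE', hsymm, hcomp⟩ := comp_symm_mem_uniformity_sets (hE : E ∈ uniformity Omega1)
  -- regressive function
  have hf : ∀ x : Omega1, ozero < x → ∃ l, l < x ∧ Set.Ioc l x ⊆ {y | (x, y) ∈ E'} := by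
    intro x hx
    have hb : {y | (x, y) ∈ E'} ∈ nhds x := UniformSpace.ball_mem_nhds x hE'
    obtain ⟨l, hl, hsub⟩ := exists_Ioc_subset_of_mem_nhds hb ⟨ozero, hx⟩
    exact ⟨l, hl, hsub⟩
  choose f hf1 hf2 using hf
  set F : Omega1 → Omega1 := fun x => if h : ozero < x then f x h else ozero with hFdef
  have hF : ∀ x : Omega1, ozero < x → F x < x ∧ Set.Ioc (F x) x ⊆ {y | (x, y) ∈ E'} := by
    intro x hx
    simp only [hFdef, dif_pos hx]
    exact ⟨hf1 x hx, hf2 x hx⟩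
  -- unboundedness of a sublevel of F
  by_cases hU : ∃ α : Omega1, ∀ y : Omega1, ∃ x, ozero < x ∧ F x ≤ α ∧ y < x
  · obtain ⟨α, hα⟩ := hU
    obtain ⟨x₀, hx₀pos, hx₀F, hx₀gt⟩ := hα α
    have hkey : ∀ y : Omega1, α < y → (x₀, y) ∈ E := by
      intro y hy
      obtain ⟨x, hxpos, hxF, hxgt⟩ := hα (max x₀ y)
      have hy_in : y ∈ Set.Ioc (F x) x :=
        ⟨lt_of_le_of_lt hxF hy, le_of_lt (lt_of_le_of_lt (le_max_right _ _) hxgt)⟩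
      have hx₀_in : x₀ ∈ Set.Ioc (F x) x :=
        ⟨lt_of_le_of_lt hxF hx₀gt, le_of_lt (lt_of_le_of_lt (le_max_left _ _) hxgt)⟩
      have h1 : (x, y) ∈ E' := (hF x hxpos).2 hy_in
      have h2 : (x, x₀) ∈ E' := (hF x hxpos).2 hx₀_in
      exact hcomp (SetRel.prodMk_mem_comp (hsymm.symm _ _ h2) h1)
    obtain ⟨U, hU𝒰, hsub⟩ := href x₀
    refine ⟨U, hU𝒰, (countable_Iic α).mono ?_⟩
    intro y hy
    by_contra hyle
    exact hy (hsub (hkey y (not_le.mp hyle)))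
  · exfalso
    push_neg at hU
    have hg : ∀ α : Omega1, ∃ g : Omega1, ∀ x, ozero < x → F x ≤ α → x ≤ g := by
      intro α
      obtain ⟨y, hy⟩ := hU α
      exact ⟨y, fun x h1 h2 => hy x h1 h2⟩
    choose g hg using hg
    set β : ℕ → Omega1 := fun n => Nat.rec (osucc ozero)
      (fun _ b => osucc (max b (g b))) n with hβdef
    have hβsucc : ∀ n, β (n + 1) = osucc (max (β n) (g (β n))) := fun n => rfl
    obtain ⟨b, hb1, hb2⟩ := exists_sup β
    have hbpos : ozero < b := lt_of_lt_of_le (lt_osucc ozero) (hb1 0)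
    have hFb : F b < b := (hF b hbpos).1
    obtain ⟨n, hn⟩ := hb2 (F b) hFb
    have hbg : b ≤ g (β n) := hg (β n) b hbpos (le_of_lt hn)
    have : g (β n) < g (β n) :=
      lt_of_lt_of_le
        (lt_of_le_of_lt (le_max_right (β n) (g (β n))) (lt_osucc _))
        (le_trans (by exact hb1 (n + 1)) hbg)
    exact lt_irrefl _ this

end Omega1Aux

theorem stmt_18 (𝔘 : UniformSpace Omega1)
    (hcompat : 𝔘.toTopologicalSpace = omega1OrderTopology) :
    (∀ 𝒰 : Set (Set Omega1), (∀ U ∈ 𝒰, @IsOpen _ omega1OrderTopology U) →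
      ⋃₀ 𝒰 = Set.univ →
      (∃ E ∈ 𝔘.uniformity, ∀ x : Omega1, ∃ U ∈ 𝒰, {y | (x, y) ∈ E} ⊆ U) →
      ∃ U ∈ 𝒰, (Uᶜ : Set Omega1).Countable) ∧
    ∀ 𝒰 : ℕ → Set (Set Omega1),
      (∀ n, (∀ U ∈ 𝒰 n, @IsOpen _ omega1OrderTopology U) ∧ ⋃₀ 𝒰 n = Set.univ ∧
        ∃ E ∈ 𝔘.uniformity, ∀ x : Omega1, ∃ U ∈ 𝒰 n, {y | (x, y) ∈ E} ⊆ U) →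
      ∃ U : ℕ → Set Omega1, (∀ n, U n ∈ 𝒰 n) ∧ ⋃ n, U n = Set.univ := by
  constructor
  · intro 𝒰 _ _ hunif
    exact Omega1Aux.key 𝔘 hcompat 𝒰 hunif
  · intro 𝒰 h𝒰
    obtain ⟨U₀, hU₀mem, hU₀cnt⟩ :=
      Omega1Aux.key 𝔘 hcompat (𝒰 0) (h𝒰 0).2.2
    have hcover : ∀ n (x : Omega1), ∃ U ∈ 𝒰 n, x ∈ U := by
      intro n x
      have := (h𝒰 n).2.1
      have hx : x ∈ ⋃₀ 𝒰 n := this ▸ Set.mem_univ x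
      obtain ⟨U, hU, hxU⟩ := hx
      exact ⟨U, hU, hxU⟩
    choose pick hpick1 hpick2 using hcover
    rcases Set.eq_empty_or_nonempty (U₀ᶜ : Set Omega1) with hemp | hne
    · refine ⟨fun n => Nat.rec U₀ (fun m _ => pick (m + 1) Omega1Aux.ozero) n,
        fun n => by cases n with
          | zero => exact hU₀mem
          | succ m => exact hpick1 (m + 1) Omega1Aux.ozero, ?_⟩
      rw [Set.eq_univ_iff_forall]
      intro x
      have hx : x ∈ U₀ := by
        by_contra h
        exact absurd (hemp ▸ h : x ∈ (∅ : Set Omega1)) (Set.notMem_empty x)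
      exact Set.mem_iUnion.mpr ⟨0, hx⟩
    · obtain ⟨c, hc⟩ := hU₀cnt.exists_eq_range hne
      refine ⟨fun n => Nat.rec U₀ (fun m _ => pick (m + 1) (c m)) n,
        fun n => by cases n with
          | zero => exact hU₀mem
          | succ m => exact hpick1 (m + 1) (c m), ?_⟩
      rw [Set.eq_univ_iff_forall]
      intro x
      by_cases hx : x ∈ U₀
      · exact Set.mem_iUnion.mpr ⟨0, hx⟩
      · have : x ∈ Set.range c := hc ▸ hx
        obtain ⟨m, hm⟩ := this
        exact Set.mem_iUnion.mpr ⟨m + 1, hm ▸ hpick2 (m + 1) (c m)⟩
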